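/- In the matched-filter model, given feasibility Σ_j Φ_j < 1, the equilibrium utility u_k = R_k f(γ_k)/p_k equals (B f(γ_k) h_k)/(σ² γ_k) · (1 - Σ_{j≠k} Φ_j - Φ_k)/(1 - Φ_k), and this expression is strictly decreasing in each Φ_j, j ≠ k; hence it is strictly decreasing in each R_{s,j} (for fixed γ_j), so the Nash equilibrium with the smallest symbol rates Pareto-dominates all others. -/

import Mathlib

/-- Matched-filter model at equilibrium: the utility `R_{s,k} f(γ_k)/p_k` equals
`(B f(γ_k) h_k)/(σ²γ_k) · (1 - Σ_{j≠k}Φ_j - Φ_k)/(1 - Φ_k)`, this expression is strictly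
decreasing in each `Φ_j` (`j ≠ k`), and `Φ_j` is strictly increasing in `R_{s,j}` for
fixed `γ_j`; hence the equilibrium with the smallest symbol rates Pareto-dominates. -/
theorem stmt18 (K : ℕ) (B σ2 : ℝ) (hB : 0 < B) (hσ : 0 < σ2)
    (h Rs γ p : Fin K → ℝ) (f : ℝ → ℝ)
    (hh : ∀ j, 0 < h j) (hRs : ∀ j, 0 < Rs j) (hγ : ∀ j, 0 < γ j) (hp : ∀ j, 0 < p j)
    (k : Fin K) (hfk : 0 < f (γ k))
    (hSIR : ∀ j, γ j = (B / Rs j) * p j * h j /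
        (σ2 + ∑ i ∈ Finset.univ.erase j, p i * h i))
    (hfeas : ∑ j, (1 + B / (Rs j * γ j))⁻¹ < 1) :
    Rs k * f (γ k) / p k =
      (B * f (γ k) * h k / (σ2 * γ k)) *
        ((1 - (∑ j ∈ Finset.univ.erase k, (1 + B / (Rs j * γ j))⁻¹) -
            (1 + B / (Rs k * γ k))⁻¹) / (1 - (1 + B / (Rs k * γ k))⁻¹)) ∧
    (∀ (Φ' : Fin K → ℝ) (j : Fin K), j ≠ k →
      (1 + B / (Rs j * γ j))⁻¹ < Φ' j →
      (∀ i, i ≠ j → Φ' i = (1 + B / (Rs i * γ i))⁻¹) →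
      (B * f (γ k) * h k / (σ2 * γ k)) *
          ((1 - (∑ i ∈ Finset.univ.erase k, Φ' i) - Φ' k) / (1 - Φ' k)) <
        (B * f (γ k) * h k / (σ2 * γ k)) *
          ((1 - (∑ i ∈ Finset.univ.erase k, (1 + B / (Rs i * γ i))⁻¹) -
              (1 + B / (Rs k * γ k))⁻¹) / (1 - (1 + B / (Rs k * γ k))⁻¹))) ∧
    (∀ j : Fin K, ∀ r₁ r₂ : ℝ, 0 < r₁ → r₁ < r₂ →
      (1 + B / (r₁ * γ j))⁻¹ < (1 + B / (r₂ * γ j))⁻¹) := by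
  set Φ : Fin K → ℝ := fun j => (1 + B / (Rs j * γ j))⁻¹ with hΦdef
  have hRγ : ∀ j, 0 < Rs j * γ j := fun j => mul_pos (hRs j) (hγ j)
  have hΦeq : ∀ j, Φ j = Rs j * γ j / (Rs j * γ j + B) := by
    intro j
    have hne : Rs j * γ j ≠ 0 := (hRγ j).ne'
    show (1 + B / (Rs j * γ j))⁻¹ = _
    have h1 : 1 + B / (Rs j * γ j) = (Rs j * γ j + B) / (Rs j * γ j) := by
      rw [eq_div_iff hne, add_mul, div_mul_cancel₀ _ hne]; ring
    rw [h1, inv_div]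
  have hΦpos : ∀ j, 0 < Φ j := by
    intro j; rw [hΦeq]
    exact div_pos (hRγ j) (by linarith [hRγ j])
  have hΦlt1 : ∀ j, Φ j < 1 := by
    intro j
    rw [hΦeq, div_lt_one (by linarith [hRγ j])]
    linarith [hRγ j]
  set T : ℝ := ∑ i, p i * h i with hT
  have hqT : ∀ j, (∑ i ∈ Finset.univ.erase j, p i * h i) = T - p j * h j := by
    intro j
    rw [hT, ← Finset.sum_erase_add Finset.univ _ (Finset.mem_univ j)]
    ring
  have hq : ∀ j, p j * h j = Φ j * (σ2 + T) := by
    intro j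
    have hS := hSIR j
    rw [hqT j] at hS
    have hqpos : ∀ i, 0 < p i * h i := fun i => mul_pos (hp i) (hh i)
    have hTj : 0 ≤ T - p j * h j := by
      rw [hT, ← Finset.sum_erase_add Finset.univ _ (Finset.mem_univ j)]
      have : 0 ≤ ∑ i ∈ Finset.univ.erase j, p i * h i :=
        Finset.sum_nonneg fun i _ => (hqpos i).le
      linarith
    have hD : (0:ℝ) < σ2 + (T - p j * h j) := by linarith
    have hRs' := (hRs j).ne'
    have hne : Rs j * γ j + B ≠ 0 := by linarith [hRγ j]
    rw [hΦeq, div_mul_eq_mul_div, eq_div_iff hne]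
    field_simp at hS
    linear_combination -hS
  set S : ℝ := ∑ j, Φ j with hSdef
  have hTS : T = S * (σ2 + T) :=
    calc T = ∑ i, p i * h i := hT
      _ = ∑ i, Φ i * (σ2 + T) := Finset.sum_congr rfl fun i _ => hq i
      _ = (∑ i, Φ i) * (σ2 + T) := (Finset.sum_mul _ _ _).symm
      _ = S * (σ2 + T) := by rw [hSdef]
  have hS1 : S < 1 := hfeas
  have h1S : (0:ℝ) < 1 - S := by linarith
  have h1S' : (1:ℝ) - S ≠ 0 := h1S.ne'
  have hσT : σ2 + T = σ2 / (1 - S) := by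
    field_simp
    linarith [hTS]
  have hpk : p k * h k = Φ k * σ2 / (1 - S) := by
    rw [hq k, hσT]; ring
  have hSsplit : S = (∑ j ∈ Finset.univ.erase k, Φ j) + Φ k := by
    rw [hSdef, ← Finset.sum_erase_add Finset.univ _ (Finset.mem_univ k)]
  have h1Φk : (0:ℝ) < 1 - Φ k := by linarith [hΦlt1 k]
  refine ⟨?_, ?_, ?_⟩
  · -- main equality
    have hnum : 1 - (∑ j ∈ Finset.univ.erase k, Φ j) - Φ k = 1 - S := by
      rw [hSsplit]; ring
    show Rs k * f (γ k) / p k =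
      (B * f (γ k) * h k / (σ2 * γ k)) *
        ((1 - (∑ j ∈ Finset.univ.erase k, Φ j) - Φ k) / (1 - Φ k))
    rw [hnum]
    have hBk : Rs k * γ k + B ≠ 0 := by linarith [hRγ k]
    have h1Φk' : 1 - Φ k = B / (Rs k * γ k + B) := by
      rw [hΦeq, eq_div_iff hBk, sub_mul, one_mul, div_mul_cancel₀ _ hBk]
      ring
    have hhne : h k ≠ 0 := (hh k).ne'
    have hpk' : p k = Φ k * σ2 / ((1 - S) * h k) := by
      field_simp at hpk ⊢
      linear_combination hpk
    rw [hpk', h1Φk', hΦeq]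
    have hRne : Rs k ≠ 0 := (hRs k).ne'
    have hγne : γ k ≠ 0 := (hγ k).ne'
    have hσne : σ2 ≠ 0 := hσ.ne'
    have hBne : B ≠ 0 := hB.ne'
    field_simp
  · -- strict decrease in Φ_j
    intro Φ' j hjk hΦ'j hΦ'i
    have hjk' : j ∈ Finset.univ.erase k := Finset.mem_erase.mpr ⟨hjk, Finset.mem_univ j⟩
    have hΦ'k : Φ' k = Φ k := hΦ'i k (fun hc => hjk hc.symm)
    have hsum : (∑ i ∈ Finset.univ.erase k, Φ i) < ∑ i ∈ Finset.univ.erase k, Φ' i := by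
      rw [← Finset.add_sum_erase _ _ hjk', ← Finset.add_sum_erase _ Φ' hjk']
      have heq : ∑ i ∈ (Finset.univ.erase k).erase j, Φ' i
          = ∑ i ∈ (Finset.univ.erase k).erase j, Φ i := by
        refine Finset.sum_congr rfl fun i hi => hΦ'i i (Finset.mem_erase.mp hi).1
      rw [heq]
      exact add_lt_add_of_lt_of_le hΦ'j le_rfl
    have hC : 0 < B * f (γ k) * h k / (σ2 * γ k) :=
      div_pos (mul_pos (mul_pos hB hfk) (hh k)) (mul_pos hσ (hγ k))
    rw [hΦ'k]
    apply mul_lt_mul_of_pos_left _ hC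
    apply div_lt_div_of_pos_right _ h1Φk
    linarith
  · -- monotone in r
    intro j r₁ r₂ hr1 hr12
    have h2 : (0:ℝ) < r₂ := lt_trans hr1 hr12
    have hlt : B / (r₂ * γ j) < B / (r₁ * γ j) := by
      apply div_lt_div_of_pos_left hB (mul_pos hr1 (hγ j))
      exact mul_lt_mul_of_pos_right hr12 (hγ j)
    have hd2 : 0 < B / (r₂ * γ j) := div_pos hB (mul_pos h2 (hγ j))
    have h01 : (0:ℝ) < 1 + B / (r₂ * γ j) := by linarith
    exact inv_strictAnti₀ h01 (by linarith)
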